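/- Let φ : [0,∞) → [0,∞] be a weak Φ-function (increasing, φ(0)=0=lim_{t→0⁺}φ(t), lim_{t→∞}φ(t)=∞, and t↦φ(t)/t almost increasing). Then φ satisfies the doubling condition Δ₂ (there exists K ≥ 2 with φ(2t) ≤ K φ(t) for all t ≥ 0) if and only if φ satisfies (aDec)_q for some q < ∞ (t ↦ φ(t)/t^q is almost decreasing). -/

import Mathlib

open scoped NNReal ENNReal

private lemma stmt4_pow_aux (φ : ℝ≥0 → ℝ≥0∞) (K : ℝ≥0)
    (hK : ∀ t : ℝ≥0, φ (2 * t) ≤ K * φ t) :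
    ∀ (n : ℕ) (t : ℝ≥0), φ (2 ^ n * t) ≤ ((K ^ n : ℝ≥0) : ℝ≥0∞) * φ t := by
  intro n
  induction n with
  | zero => intro t; simp
  | succ m ih =>
    intro t
    have h1 : (2 : ℝ≥0) ^ (m + 1) * t = 2 * (2 ^ m * t) := by ring
    rw [h1]
    calc φ (2 * (2 ^ m * t)) ≤ K * φ (2 ^ m * t) := hK _
      _ ≤ (K : ℝ≥0∞) * (((K ^ m : ℝ≥0) : ℝ≥0∞) * φ t) := mul_le_mul_right (ih t) _
      _ = ((K ^ (m + 1) : ℝ≥0) : ℝ≥0∞) * φ t := by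
          push_cast; ring

/-- A weak `Φ`-function `φ` satisfies the doubling condition `Δ₂` if and only if it
satisfies `(aDec)_q` for some `q < ∞`. -/
theorem stmt_4 (φ : ℝ≥0 → ℝ≥0∞)
    (hmono : Monotone φ) (h0 : φ 0 = 0)
    (hlim0 : Filter.Tendsto φ (nhdsWithin 0 (Set.Ioi 0)) (nhds 0))
    (hcoer : Filter.Tendsto φ Filter.atTop Filter.atTop)
    (haInc : ∃ a : ℝ≥0, 1 ≤ a ∧ ∀ s t : ℝ≥0, 0 < s → s ≤ t →
      φ s / (s : ℝ≥0∞) ≤ a * (φ t / (t : ℝ≥0∞))) :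
    (∃ K : ℝ≥0, 2 ≤ K ∧ ∀ t : ℝ≥0, φ (2 * t) ≤ K * φ t) ↔
      (∃ q : ℝ, 0 < q ∧ ∃ a : ℝ≥0, 1 ≤ a ∧ ∀ s t : ℝ≥0, 0 < s → s ≤ t →
        φ t / (t : ℝ≥0∞) ^ q ≤ a * (φ s / (s : ℝ≥0∞) ^ q)) := by
  constructor
  · rintro ⟨K, hK2, hK⟩
    set q : ℝ := Real.logb 2 K with hq
    have hKpos : (0 : ℝ) < (K : ℝ) := by positivity
    have h2q : (2 : ℝ) ^ q = (K : ℝ) := Real.rpow_logb (by norm_num) (by norm_num) hKpos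
    have hq1 : (1 : ℝ) ≤ q := by
      rw [hq, Real.le_logb_iff_rpow_le (by norm_num) hKpos]
      simpa using (by exact_mod_cast hK2 : (2 : ℝ) ≤ (K : ℝ))
    have hqpos : (0 : ℝ) < q := lt_of_lt_of_le one_pos hq1
    refine ⟨q, hqpos, K, le_trans one_le_two hK2, ?_⟩
    intro s t hs hst
    have ht : (0 : ℝ≥0) < t := lt_of_lt_of_le hs hst
    -- find n with t ≤ 2^n * s and 2^n * s ≤ 2 * t
    obtain ⟨n, hn1, hn2⟩ : ∃ n : ℕ, t ≤ 2 ^ n * s ∧ (2 : ℝ≥0) ^ n * s ≤ 2 * t := by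
      have hex : ∃ n : ℕ, t ≤ 2 ^ n * s := by
        obtain ⟨n, hn⟩ := pow_unbounded_of_one_lt (t / s) (y := (2 : ℝ≥0)) one_lt_two
        refine ⟨n, ?_⟩
        calc t = t / s * s := by rw [div_mul_cancel₀ _ hs.ne']
          _ ≤ 2 ^ n * s := mul_le_mul_left hn.le s
      classical
      refine ⟨Nat.find hex, Nat.find_spec hex, ?_⟩
      rcases Nat.eq_zero_or_pos (Nat.find hex) with h | h
      · rw [h, pow_zero, one_mul]
        calc s ≤ t := hst
          _ = 1 * t := (one_mul t).symm
          _ ≤ 2 * t := mul_le_mul_left one_le_two t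
      · obtain ⟨m, hm⟩ := Nat.exists_eq_succ_of_ne_zero h.ne'
        have hlt : ¬ t ≤ 2 ^ m * s := Nat.find_min hex (by omega)
        push_neg at hlt
        rw [hm, pow_succ]
        calc 2 ^ m * 2 * s = 2 * (2 ^ m * s) := by ring
          _ ≤ 2 * t := mul_le_mul_right hlt.le 2
    -- key NNReal inequality : K^n * s^q ≤ K * t^q
    have key : (K : ℝ≥0) ^ n * s ^ q ≤ K * t ^ q := by
      rw [← NNReal.coe_le_coe]
      push_cast [NNReal.coe_rpow]
      have e1 : ((K : ℝ)) ^ n = ((2 : ℝ) ^ n) ^ q := by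
        rw [← h2q, ← Real.rpow_natCast ((2:ℝ) ^ q) n, ← Real.rpow_natCast (2:ℝ) n,
          ← Real.rpow_mul (by norm_num), ← Real.rpow_mul (by norm_num), mul_comm]
      have hn2' : ((2 : ℝ) ^ n) * (s : ℝ) ≤ 2 * (t : ℝ) := by
        exact_mod_cast hn2
      calc ((K : ℝ)) ^ n * (s : ℝ) ^ q = ((2:ℝ) ^ n) ^ q * (s : ℝ) ^ q := by rw [e1]
        _ = ((2:ℝ) ^ n * (s : ℝ)) ^ q := by
            rw [← Real.mul_rpow (by positivity) s.coe_nonneg]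
        _ ≤ (2 * (t : ℝ)) ^ q := Real.rpow_le_rpow (by positivity) hn2' hqpos.le
        _ = (2:ℝ) ^ q * (t : ℝ) ^ q := Real.mul_rpow (by norm_num) t.coe_nonneg
        _ = (K : ℝ) * (t : ℝ) ^ q := by rw [h2q]
    have htq0 : t ^ q ≠ 0 := (NNReal.rpow_pos ht).ne'
    have hsq0 : s ^ q ≠ 0 := (NNReal.rpow_pos hs).ne'
    have hφt : φ t ≤ ((K ^ n : ℝ≥0) : ℝ≥0∞) * φ s :=
      le_trans (hmono hn1) (stmt4_pow_aux φ K hK n s)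
    rw [← ENNReal.coe_rpow_of_ne_zero ht.ne', ← ENNReal.coe_rpow_of_ne_zero hs.ne']
    have hdd : ((K ^ n : ℝ≥0) : ℝ≥0∞) / ((t ^ q : ℝ≥0) : ℝ≥0∞)
        ≤ (K : ℝ≥0∞) / ((s ^ q : ℝ≥0) : ℝ≥0∞) := by
      rw [← ENNReal.coe_div htq0, ← ENNReal.coe_div hsq0, ENNReal.coe_le_coe]
      exact (div_le_div_iff₀ (NNReal.rpow_pos ht) (NNReal.rpow_pos hs)).mpr key
    calc φ t / ((t ^ q : ℝ≥0) : ℝ≥0∞)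
        ≤ (((K ^ n : ℝ≥0) : ℝ≥0∞) * φ s) / ((t ^ q : ℝ≥0) : ℝ≥0∞) :=
          ENNReal.div_le_div_right hφt _
      _ = φ s * (((K ^ n : ℝ≥0) : ℝ≥0∞) / ((t ^ q : ℝ≥0) : ℝ≥0∞)) := by
          rw [mul_comm, mul_div_assoc]
      _ ≤ φ s * ((K : ℝ≥0∞) / ((s ^ q : ℝ≥0) : ℝ≥0∞)) := mul_le_mul_right hdd _
      _ = (K : ℝ≥0∞) * (φ s / ((s ^ q : ℝ≥0) : ℝ≥0∞)) := by
          rw [← mul_div_assoc, ← mul_div_assoc, mul_comm]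
  · rintro ⟨q, hqpos, a, ha1, ha⟩
    refine ⟨max 2 (a * 2 ^ q), le_max_left _ _, ?_⟩
    intro t
    rcases eq_or_lt_of_le (zero_le : (0 : ℝ≥0) ≤ t) with h | ht
    · simp [← h, h0]
    · have h2t : (0 : ℝ≥0) < 2 * t := by positivity
      have hdiv := ha t (2 * t) ht
        (by calc t = 1 * t := (one_mul t).symm
              _ ≤ 2 * t := mul_le_mul_left one_le_two t)
      rw [← ENNReal.coe_rpow_of_ne_zero h2t.ne', ← ENNReal.coe_rpow_of_ne_zero ht.ne'] at hdiv
      have htq0 : ((t ^ q : ℝ≥0) : ℝ≥0∞) ≠ 0 := by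
        exact_mod_cast (NNReal.rpow_pos ht).ne'
      have h2tq0 : (((2 * t) ^ q : ℝ≥0) : ℝ≥0∞) ≠ 0 := by
        exact_mod_cast (NNReal.rpow_pos h2t).ne'
      have hstep : φ (2 * t) ≤ (a : ℝ≥0∞) * (φ t / ((t ^ q : ℝ≥0) : ℝ≥0∞))
          * (((2 * t) ^ q : ℝ≥0) : ℝ≥0∞) := by
        rw [← ENNReal.div_mul_cancel h2tq0 ENNReal.coe_ne_top (b := φ (2 * t))]
        exact mul_le_mul_left hdiv _
      have hsplit : (((2 * t) ^ q : ℝ≥0) : ℝ≥0∞)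
          = ((2 ^ q : ℝ≥0) : ℝ≥0∞) * ((t ^ q : ℝ≥0) : ℝ≥0∞) := by
        rw [← ENNReal.coe_mul, ← NNReal.mul_rpow]
      calc φ (2 * t) ≤ (a : ℝ≥0∞) * (φ t / ((t ^ q : ℝ≥0) : ℝ≥0∞))
            * (((2 * t) ^ q : ℝ≥0) : ℝ≥0∞) := hstep
        _ = ((a * 2 ^ q : ℝ≥0) : ℝ≥0∞)
            * ((φ t / ((t ^ q : ℝ≥0) : ℝ≥0∞)) * ((t ^ q : ℝ≥0) : ℝ≥0∞)) := by
            rw [hsplit, ENNReal.coe_mul]; ring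
        _ = ((a * 2 ^ q : ℝ≥0) : ℝ≥0∞) * φ t := by
            rw [ENNReal.div_mul_cancel htq0 ENNReal.coe_ne_top]
        _ ≤ ((max 2 (a * 2 ^ q) : ℝ≥0) : ℝ≥0∞) * φ t := by
            exact mul_le_mul_left (by exact_mod_cast le_max_right _ _) _
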